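/- arXiv:2401.02699 — 9 statements merged into one kernel-verified Lean document; each statement's English description precedes it below -/
import Mathlib

section
/- Let R be a commutative ring with a prime ideal 𝔫 equal to its nilradical. If the map 𝔫 → 𝔫R_𝔫 (induced by localization at 𝔫) is surjective, then the canonical ring homomorphism R → (R/𝔫) ×_{k(𝔫)} R_𝔫 into the fiber product over the residue field k(𝔫) = R_𝔫/𝔫R_𝔫 is surjective. -/
/-- Let `R` be a commutative ring whose nilradical `𝔫` is prime.  If `𝔫 → 𝔫R_𝔫` is
surjective, then `R → (R/𝔫) ×_{k(𝔫)} R_𝔫` is surjective: for every `a : R` and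
`y : R_𝔫` agreeing in the residue field `k(𝔫) = R_𝔫/𝔫R_𝔫`, there is `r : R` with
`r ≡ a mod 𝔫` and `r ↦ y` in `R_𝔫`. -/
theorem stmt_3 (R : Type*) [CommRing R] (hp : (nilradical R).IsPrime)
    (hsurj : ∀ y ∈ (nilradical R).map
        (algebraMap R (Localization (@Ideal.primeCompl R _ (nilradical R) hp))),
      ∃ x ∈ nilradical R,
        algebraMap R (Localization (@Ideal.primeCompl R _ (nilradical R) hp)) x = y) :
    ∀ (a : R) (y : Localization (@Ideal.primeCompl R _ (nilradical R) hp)),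
      algebraMap R (Localization (@Ideal.primeCompl R _ (nilradical R) hp)) a - y ∈
          (nilradical R).map
            (algebraMap R (Localization (@Ideal.primeCompl R _ (nilradical R) hp))) →
      ∃ r : R, r - a ∈ nilradical R ∧
        algebraMap R (Localization (@Ideal.primeCompl R _ (nilradical R) hp)) r = y := by
  intro a y hy
  obtain ⟨x, hx, hxeq⟩ := hsurj _ hy
  refine ⟨a - x, ?_, ?_⟩
  · simpa using (nilradical R).neg_mem hx
  · rw [map_sub, hxeq]; ring
end

section
/- Let 𝒪 be a valuation ring with fraction field K, let A be a local ring of Krull dimension zero with residue field A/𝔪_A ≅ K, and let R = 𝒪 ×_K A be the fiber product. Then R is a local ring, the nilradical 𝔫 of R is the kernel of R → 𝒪 and equals the unique minimal prime of R, and R/𝔫 ≅ 𝒪. -/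
/-- The Milnor fiber product `R = 𝒪 ×_K A` as a subring of `𝒪 × A`. -/
def milnorRing (O K A : Type*) [CommRing O] [CommRing K] [CommRing A]
    (f : O →+* K) (π : A →+* K) : Subring (O × A) :=
  RingHom.eqLocus (f.comp (RingHom.fst O A)) (π.comp (RingHom.snd O A))

/-- In a local ring of Krull dimension zero, the maximal ideal consists of nilpotents. -/
lemma maximalIdeal_le_nilradical_of_dimzero (A : Type*) [CommRing A] [IsLocalRing A]
    (hA : ringKrullDim A = 0) : IsLocalRing.maximalIdeal A ≤ nilradical A := by
  intro a ha
  by_contra hnil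
  rw [nilradical_eq_sInf, Ideal.mem_sInf] at hnil
  push_neg at hnil
  obtain ⟨p, hp, hap⟩ := hnil
  simp only [Set.mem_setOf_eq] at hp
  have hle : p ≤ IsLocalRing.maximalIdeal A := IsLocalRing.le_maximalIdeal hp.ne_top
  have hlt : (⟨p, hp⟩ : PrimeSpectrum A) < ⟨IsLocalRing.maximalIdeal A, inferInstance⟩ := by
    refine lt_of_le_of_ne hle ?_
    intro h
    apply hap
    rw [show p = IsLocalRing.maximalIdeal A from congrArg PrimeSpectrum.asIdeal h]
    exact ha
  let s : LTSeries (PrimeSpectrum A) :=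
    (RelSeries.singleton _ (⟨p, hp⟩ : PrimeSpectrum A)).snoc
      ⟨IsLocalRing.maximalIdeal A, inferInstance⟩
      (by simpa [RelSeries.last_singleton] using hlt)
  have hlen := Order.LTSeries.length_le_krullDim s
  have hdim : Order.krullDim (PrimeSpectrum A) = 0 := hA
  rw [hdim] at hlen
  have hl : s.length = 1 := rfl
  rw [hl] at hlen
  exact absurd hlen (by decide)

/-- Let `𝒪` be a valuation ring with fraction field `K`, `A` a zero-dimensional local
ring with residue field `K`, and `R = 𝒪 ×_K A`.  Then `R` is local, the nilradical of
`R` is the kernel of `R → 𝒪`, it is the unique minimal prime, and `R/𝔫 ≅ 𝒪`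
(the projection `R → 𝒪` is surjective with kernel the nilradical). -/
theorem stmt_4 (O K A : Type*) [CommRing O] [IsDomain O] [ValuationRing O]
    [Field K] [Algebra O K] [IsFractionRing O K]
    [CommRing A] [IsLocalRing A] (hA : ringKrullDim A = 0)
    (π : A →+* K) (hπ : Function.Surjective π)
    (hker : RingHom.ker π = IsLocalRing.maximalIdeal A) :
    IsLocalRing (milnorRing O K A (algebraMap O K) π) ∧
    RingHom.ker ((RingHom.fst O A).comp (milnorRing O K A (algebraMap O K) π).subtype)
      = nilradical (milnorRing O K A (algebraMap O K) π) ∧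
    (∀ p ∈ minimalPrimes (milnorRing O K A (algebraMap O K) π),
      p = nilradical (milnorRing O K A (algebraMap O K) π)) ∧
    Function.Surjective
      ((RingHom.fst O A).comp (milnorRing O K A (algebraMap O K) π).subtype) := by
  set R := milnorRing O K A (algebraMap O K) π with hR
  have hmem : ∀ x : O × A, x ∈ R ↔ algebraMap O K x.1 = π x.2 := fun x => Iff.rfl
  set φ : R →+* O := (RingHom.fst O A).comp R.subtype with hφ
  -- surjectivity
  have hsurj : Function.Surjective φ := by
    intro o
    obtain ⟨a, ha⟩ := hπ (algebraMap O K o)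
    exact ⟨⟨(o, a), ha.symm⟩, rfl⟩
  -- elements of R whose first component is a unit are units
  have hunit : ∀ x : R, IsUnit (x : O × A).1 → IsUnit x := by
    rintro ⟨⟨o, a⟩, hx⟩ ho
    simp only at ho
    have hoK : algebraMap O K o = π a := hx
    have hane : π a ≠ 0 := by
      rw [← hoK]
      simp only [ne_eq, map_eq_zero_iff _ (IsFractionRing.injective O K)]
      exact ho.ne_zero
    have ha : IsUnit a := by
      by_contra h
      exact hane (RingHom.mem_ker.mp (hker.symm ▸ (IsLocalRing.mem_maximalIdeal a).mpr h))
    obtain ⟨u, hu⟩ := ho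
    obtain ⟨v, hv⟩ := ha
    have h1 : algebraMap O K (↑u⁻¹ : O) = (π a)⁻¹ :=
      eq_inv_of_mul_eq_one_left (by rw [← hoK, ← hu, ← map_mul, Units.inv_mul, map_one])
    have h2 : π (↑v⁻¹ : A) = (π a)⁻¹ :=
      eq_inv_of_mul_eq_one_left (by rw [← hv, ← map_mul, Units.inv_mul, map_one])
    have hmemInv : ((↑u⁻¹ : O), (↑v⁻¹ : A)) ∈ R := by
      rw [hmem]
      simp only
      rw [h1, h2]
    refine IsUnit.of_mul_eq_one (a := _) ⟨(↑u⁻¹, ↑v⁻¹), hmemInv⟩ (Subtype.ext ?_)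
    show (o * ↑u⁻¹, a * ↑v⁻¹) = ((1 : O), (1 : A))
    rw [← hu, ← hv, Units.mul_inv, Units.mul_inv]
  haveI : Nontrivial R := ⟨0, 1, fun h => by
    have : ((0 : R) : O × A).1 = ((1 : R) : O × A).1 := by rw [h]
    exact zero_ne_one this⟩
  have hlocal : IsLocalRing R := by
    refine IsLocalRing.of_isUnit_or_isUnit_one_sub_self ?_
    intro x
    rcases IsLocalRing.isUnit_or_isUnit_one_sub_self ((x : O × A).1) with h | h
    · exact Or.inl (hunit _ h)
    · exact Or.inr (hunit (1 - x)
        ((show ((1 - x : R) : O × A).1 = 1 - (x : O × A).1 from rfl) ▸ h))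
  -- kernel = nilradical
  have hnilA : IsLocalRing.maximalIdeal A ≤ nilradical A :=
    maximalIdeal_le_nilradical_of_dimzero A hA
  have hkerφ : RingHom.ker φ = nilradical R := by
    ext x
    rw [RingHom.mem_ker, mem_nilradical]
    constructor
    · intro hx0
      have ho : (x : O × A).1 = 0 := hx0
      have haK : π (x : O × A).2 = 0 := by
        have hxm := (hmem (x : O × A)).mp x.2
        rw [← hxm, ho, map_zero]
      obtain ⟨n, hn⟩ : IsNilpotent (x : O × A).2 :=
        hnilA (hker ▸ RingHom.mem_ker.mpr haK)
      refine ⟨n + 1, Subtype.ext ?_⟩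
      rw [SubmonoidClass.coe_pow]
      have hx2 : (x : O × A).2 ^ (n + 1) = 0 := by rw [pow_succ, hn, zero_mul]
      show ((x : O × A) ^ (n + 1)) = ((0 : R) : O × A)
      rw [Prod.pow_def]
      ext
      · show (x : O × A).1 ^ (n + 1) = 0
        rw [ho, zero_pow (Nat.succ_ne_zero n)]
      · exact hx2
    · rintro ⟨n, hn⟩
      have hcoe : ((x : O × A)) ^ n = 0 := by
        rw [← SubmonoidClass.coe_pow, hn, ZeroMemClass.coe_zero]
      have h1 : (x : O × A).1 ^ n = 0 := by
        have := congrArg Prod.fst hcoe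
        rwa [Prod.pow_def] at this
      show (x : O × A).1 = 0
      rcases Nat.eq_zero_or_pos n with rfl | hnpos
      · exfalso
        rw [pow_zero] at hn
        exact one_ne_zero hn
      · exact pow_eq_zero_iff hnpos.ne' |>.mp h1
  -- minimal primes
  have hprime : (nilradical R).IsPrime := hkerφ ▸ RingHom.ker_isPrime φ
  have hmin : ∀ p ∈ minimalPrimes R, p = nilradical R := by
    intro p hp
    haveI := hp.1.1
    exact le_antisymm (hp.2 ⟨hprime, bot_le⟩ (nilradical_le_prime p)) (nilradical_le_prime p)
  exact ⟨hlocal, hkerφ, hmin, hsurj⟩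
end

section
/- Let 𝒪 be a valuation ring with fraction field K, A a zero-dimensional local ring with residue field K, and R = 𝒪 ×_K A. Then the localization of R at its nilradical is isomorphic to A, and the ring of total fractions Q(R) (the localization of R at its set of non-zerodivisors) is isomorphic to A. -/
/-- Let `𝒪` be a valuation ring with fraction field `K`, `A` a zero-dimensional local
ring with residue field `K`, and `R = 𝒪 ×_K A`.  Then the nilradical of `R` is prime,
the localization of `R` at its nilradical is isomorphic to `A`, and the total ring of
fractions `Q(R)` (localization at the non-zerodivisors) is isomorphic to `A`. -/
theorem stmt_5 (O K A : Type*) [CommRing O] [IsDomain O] [ValuationRing O]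
    [Field K] [Algebra O K] [IsFractionRing O K]
    [CommRing A] [IsLocalRing A] (hA : ringKrullDim A = 0)
    (π : A →+* K) (hπ : Function.Surjective π)
    (hker : RingHom.ker π = IsLocalRing.maximalIdeal A) :
    ∃ hp : (nilradical (milnorRing O K A (algebraMap O K) π)).IsPrime,
      Nonempty (Localization
          (@Ideal.primeCompl _ _ (nilradical (milnorRing O K A (algebraMap O K) π)) hp)
        ≃+* A) ∧
      Nonempty (FractionRing (milnorRing O K A (algebraMap O K) π) ≃+* A) := by
  classical
  set R := milnorRing O K A (algebraMap O K) π with hRdef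
  have finj : Function.Injective (algebraMap O K) := IsFractionRing.injective O K
  -- every prime of A is the maximal ideal
  have hprimeA : ∀ (p : Ideal A), p.IsPrime → p = IsLocalRing.maximalIdeal A := by
    intro p hp
    by_contra hne
    have hlt : (⟨p, hp⟩ : PrimeSpectrum A) < ⟨IsLocalRing.maximalIdeal A, inferInstance⟩ :=
      lt_of_le_of_ne (IsLocalRing.le_maximalIdeal hp.ne_top)
        (by simpa [PrimeSpectrum.ext_iff] using hne)
    have h1 := Order.LTSeries.length_le_krullDim
      ((RelSeries.singleton _ (⟨p, hp⟩ : PrimeSpectrum A)).snoc _ hlt)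
    rw [show Order.krullDim (PrimeSpectrum A) = ringKrullDim A from rfl, hA] at h1
    simp [RelSeries.snoc] at h1
    exact absurd h1 (Nat.succ_ne_zero _)
  have hnilA : nilradical A = IsLocalRing.maximalIdeal A := by
    refine le_antisymm (nilradical_le_prime _) ?_
    rw [nilradical_eq_sInf]
    exact le_sInf fun p hp => (hprimeA p hp).ge
  -- basic facts about R
  have h0 : ∀ x : R, (x : O × A).2 = 0 → x = 0 := by
    intro x hx
    have hx1 : algebraMap O K (x : O × A).1 = π (x : O × A).2 := x.2
    rw [hx] at hx1
    have : (x : O × A).1 = 0 := finj (by simpa using hx1)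
    exact Subtype.ext (Prod.ext this hx)
  let φ : R →+* A := (RingHom.snd O A).comp (Subring.subtype R)
  have φinj : Function.Injective φ := by
    intro x y hxy
    have := h0 (x - y) (by
      show ((x : O × A) - (y : O × A)).2 = 0
      rw [Prod.snd_sub, sub_eq_zero]; exact hxy)
    rwa [sub_eq_zero] at this
  have hnil : ∀ x : R, x ∈ nilradical R ↔ (x : O × A).2 ∈ IsLocalRing.maximalIdeal A := by
    intro x
    rw [← hnilA]
    constructor
    · intro hx
      obtain ⟨n, hn⟩ := hx
      exact ⟨n, by
        have : φ (x ^ n) = 0 := by rw [hn, map_zero]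
        simpa [φ] using this⟩
    · rintro ⟨n, hn⟩
      refine ⟨n, h0 (x ^ n) ?_⟩
      simpa [φ] using hn
  have hunit : ∀ x : R, x ∉ nilradical R ↔ IsUnit (x : O × A).2 := by
    intro x
    rw [hnil x]
    simp [IsLocalRing.mem_maximalIdeal, mem_nonunits_iff]
  -- nilradical is prime
  have hp : (nilradical R).IsPrime := by
    constructor
    · intro h
      have : ((1 : R) : O × A).2 ∈ IsLocalRing.maximalIdeal A := (hnil 1).mp (h ▸ Submodule.mem_top)
      exact (IsLocalRing.maximalIdeal A).ne_top_iff_one.mp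
        (IsLocalRing.maximalIdeal.isMaximal A).ne_top this
    · intro x y hxy
      have : (x : O × A).2 * (y : O × A).2 ∈ IsLocalRing.maximalIdeal A := (hnil (x * y)).mp hxy
      rcases (IsLocalRing.maximalIdeal.isMaximal A).isPrime.mem_or_mem this with h | h
      · exact Or.inl ((hnil x).mpr h)
      · exact Or.inr ((hnil y).mpr h)
  haveI := hp
  letI : Algebra R A := φ.toAlgebra
  have halg : ∀ x : R, algebraMap R A x = (x : O × A).2 := fun _ => rfl
  have isLoc : IsLocalization (nilradical R).primeCompl A := by
    constructor
    constructor
    · rintro ⟨y, hy⟩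
      exact (hunit y).mp hy
    · intro a
      obtain ⟨⟨o, s⟩, hos⟩ := IsLocalization.surj (nonZeroDivisors O) (π a)
      obtain ⟨a', ha'⟩ := hπ (algebraMap O K (s : O))
      have hr : ((o, a * a') : O × A) ∈ R := by
        show algebraMap O K o = π (a * a')
        rw [map_mul, ha', ← hos]
      have hs : (((s : O), a') : O × A) ∈ R := by
        show algebraMap O K (s : O) = π a'
        exact ha'.symm
      have hsM : (⟨((s : O), a'), hs⟩ : R) ∈ (nilradical R).primeCompl := by
        intro hmem
        have : a' ∈ IsLocalRing.maximalIdeal A := (hnil _).mp hmem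
        rw [← hker] at this
        rw [RingHom.mem_ker] at this
        rw [this] at ha'
        exact nonZeroDivisors.ne_zero s.2 (finj (by simpa using ha'.symm))
      exact ⟨⟨⟨(o, a * a'), hr⟩, ⟨⟨((s : O), a'), hs⟩, hsM⟩⟩, rfl⟩
    · intro x y hxy
      exact ⟨1, by rw [φinj hxy]⟩
  haveI := isLoc
  refine ⟨hp, ⟨(IsLocalization.algEquiv (nilradical R).primeCompl
    (Localization (nilradical R).primeCompl) A).toRingEquiv⟩, ?_⟩
  -- nonZeroDivisors R = primeCompl
  haveI : Nontrivial R := ⟨0, 1, fun h => by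
    have : ((0 : R) : O × A).2 = ((1 : R) : O × A).2 := by rw [h]
    exact zero_ne_one (α := A) this⟩
  have heq : nonZeroDivisors R = (nilradical R).primeCompl := by
    ext x
    constructor
    · intro hx hmem
      obtain ⟨n, hn⟩ := hmem
      have : (x : R) ^ n ∈ nonZeroDivisors R := pow_mem hx n
      rw [hn] at this
      exact zero_notMem_nonZeroDivisors this
    · intro hx
      rw [mem_nonZeroDivisors_iff_right]
      intro y hy
      have h2 : (y : O × A).2 * (x : O × A).2 = 0 := by
        have : ((y * x : R) : O × A).2 = 0 := by rw [hy]; rfl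
        simpa using this
      have hu := (hunit x).mp hx
      exact h0 y (by
        have := congrArg (· * (↑hu.unit⁻¹ : A)) h2
        simpa [mul_assoc, IsUnit.mul_val_inv] using this)
  haveI : IsLocalization (nonZeroDivisors R) A := heq ▸ isLoc
  exact ⟨(IsLocalization.algEquiv (nonZeroDivisors R)
    (FractionRing R) A).toRingEquiv⟩
end

section
/- Let 𝒪 be a valuation ring with fraction field K, A a zero-dimensional local ring with residue field K, and R = 𝒪 ×_K A. In R the following divisibility trichotomy holds: for all a, b ∈ R, either a divides b, or b divides a, or a and b are both nilpotent. -/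
lemma nilp_of_dim0 {A : Type*} [CommRing A] [IsLocalRing A] (hA : ringKrullDim A = 0)
    {x : A} (hx : x ∈ IsLocalRing.maximalIdeal A) : IsNilpotent x := by
  by_contra h
  rw [← mem_nilradical, nilradical_eq_sInf, Ideal.mem_sInf] at h
  push_neg at h
  obtain ⟨p, hp, hxp⟩ := h
  have hlt : (⟨p, hp⟩ : PrimeSpectrum A) < ⟨IsLocalRing.maximalIdeal A, inferInstance⟩ := by
    refine lt_of_le_of_ne (IsLocalRing.le_maximalIdeal hp.ne_top) ?_
    intro he
    exact hxp (by rw [show p = IsLocalRing.maximalIdeal A from congrArg PrimeSpectrum.asIdeal he]; exact hx)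
  have : (1 : WithBot ℕ∞) ≤ ringKrullDim A := by
    have := Order.LTSeries.length_le_krullDim
      (RelSeries.fromListIsChain ([⟨p, hp⟩, ⟨IsLocalRing.maximalIdeal A, inferInstance⟩] : List (PrimeSpectrum A)) (by simp) (List.isChain_pair.mpr hlt))
    simpa [ringKrullDim] using this
  rw [hA] at this
  norm_num at this

lemma mem_milnorRing {O K A : Type*} [CommRing O] [CommRing K] [CommRing A]
    {f : O →+* K} {π : A →+* K} {x : O × A} :
    x ∈ milnorRing O K A f π ↔ f x.1 = π x.2 := Iff.rfl

lemma key_dvd (O K A : Type*) [CommRing O] [IsDomain O] [ValuationRing O]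
    [Field K] [Algebra O K] [IsFractionRing O K]
    [CommRing A] [IsLocalRing A]
    (π : A →+* K)
    (hker : RingHom.ker π = IsLocalRing.maximalIdeal A)
    (a b : milnorRing O K A (algebraMap O K) π)
    (h1 : algebraMap O K (a : O × A).1 ≠ 0) (hd : (a : O × A).1 ∣ (b : O × A).1) :
    a ∣ b := by
  have ha : algebraMap O K (a : O × A).1 = π (a : O × A).2 := a.2
  have hb : algebraMap O K (b : O × A).1 = π (b : O × A).2 := b.2
  have hu : IsUnit (a : O × A).2 := by
    by_contra hu
    have : (a : O × A).2 ∈ IsLocalRing.maximalIdeal A := hu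
    rw [← hker] at this
    exact h1 (by rw [ha]; exact this)
  obtain ⟨u, hu⟩ := hu
  obtain ⟨c, hc⟩ := hd
  set y : A := ↑u⁻¹ * (b : O × A).2 with hy
  have hπy : algebraMap O K c = π y := by
    have hx : (a : O × A).2 * y = (b : O × A).2 := by
      rw [hy, ← hu, ← mul_assoc, u.mul_inv, one_mul]
    have h1' : π (a : O × A).2 ≠ 0 := ha ▸ h1
    have : π (a : O × A).2 * π y = π (a : O × A).2 * algebraMap O K c := by
      rw [← map_mul, hx, ← hb, hc, map_mul, ha]
    exact (mul_left_cancel₀ h1' this).symm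
  refine ⟨⟨(c, y), mem_milnorRing.mpr hπy⟩, ?_⟩
  apply Subtype.ext
  show (b : O × A) = (a : O × A) * (c, y)
  ext
  · exact hc
  · show (b : O × A).2 = (a : O × A).2 * y
    rw [hy, ← hu, ← mul_assoc, u.mul_inv, one_mul]

/-- Let `𝒪` be a valuation ring with fraction field `K`, `A` a zero-dimensional local
ring with residue field `K`, and `R = 𝒪 ×_K A`.  Then in `R` the divisibility
trichotomy holds: for all `a b : R`, either `a ∣ b`, or `b ∣ a`, or `a` and `b` are
both nilpotent. -/
theorem stmt_6 (O K A : Type*) [CommRing O] [IsDomain O] [ValuationRing O]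
    [Field K] [Algebra O K] [IsFractionRing O K]
    [CommRing A] [IsLocalRing A] (hA : ringKrullDim A = 0)
    (π : A →+* K) (hπ : Function.Surjective π)
    (hker : RingHom.ker π = IsLocalRing.maximalIdeal A) :
    ∀ a b : milnorRing O K A (algebraMap O K) π,
      a ∣ b ∨ b ∣ a ∨ (IsNilpotent a ∧ IsNilpotent b) := by
  have inj : Function.Injective (algebraMap O K) := IsFractionRing.injective O K
  intro a b
  have nil : ∀ c : milnorRing O K A (algebraMap O K) π,
      algebraMap O K (c : O × A).1 = 0 → IsNilpotent c := by
    intro c hc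
    have h0 : (c : O × A).1 = 0 := by
      apply inj; rw [hc, map_zero]
    have hm : (c : O × A).2 ∈ IsLocalRing.maximalIdeal A := by
      rw [← hker]
      exact (show (algebraMap O K) (c : O × A).1 = π (c : O × A).2 from c.2).symm.trans hc
    obtain ⟨n, hn⟩ := nilp_of_dim0 hA hm
    refine ⟨n + 1, ?_⟩
    apply Subtype.ext
    show ((c : O × A)) ^ (n + 1) = 0
    ext
    · show (c : O × A).1 ^ (n + 1) = 0
      rw [h0, zero_pow (Nat.succ_ne_zero n)]
    · show (c : O × A).2 ^ (n + 1) = 0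
      rw [pow_succ, hn, zero_mul]
  by_cases h1 : algebraMap O K (a : O × A).1 = 0
  · by_cases h2 : algebraMap O K (b : O × A).1 = 0
    · exact Or.inr (Or.inr ⟨nil a h1, nil b h2⟩)
    · obtain ⟨c, hc | hc⟩ := ValuationRing.cond (a : O × A).1 (b : O × A).1
      · exfalso
        apply h2
        have ha0 : (a : O × A).1 = 0 := by apply inj; rw [h1, map_zero]
        rw [← hc, ha0, zero_mul, map_zero]
      · exact Or.inr (Or.inl (key_dvd O K A π hker b a h2 ⟨c, hc.symm⟩))
  · obtain ⟨c, hc | hc⟩ := ValuationRing.cond (a : O × A).1 (b : O × A).1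
    · exact Or.inl (key_dvd O K A π hker a b h1 ⟨c, hc.symm⟩)
    · by_cases h2 : algebraMap O K (b : O × A).1 = 0
      · exfalso
        apply h1
        have hb0 : (b : O × A).1 = 0 := by apply inj; rw [h2, map_zero]
        rw [← hc, hb0, zero_mul, map_zero]
      · exact Or.inr (Or.inl (key_dvd O K A π hker b a h2 ⟨c, hc.symm⟩))
end

section
/- Let 𝒪 be a henselian valuation ring with fraction field K, A a zero-dimensional local ring with residue field K, and R = 𝒪 ×_K A. Then R is a henselian local ring. -/
open Polynomial IsLocalRing

section Newton

variable {R : Type*} [CommRing R]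

private lemma newton_aux : ∀ (n : ℕ) (F : R[X]) (a : R),
    IsUnit (F.derivative.eval a) → F.eval a ^ n = 0 →
    ∃ r : R, F.eval r = 0 ∧ IsNilpotent (r - a) := by
  intro n
  induction n using Nat.strong_induction_on with
  | _ n ih =>
    match n with
    | 0 =>
      intro F a _ h0
      have h1 : (1 : R) = 0 := by simpa using h0
      have : Subsingleton R := subsingleton_of_zero_eq_one h1.symm
      exact ⟨a, Subsingleton.elim _ _, 0, Subsingleton.elim _ _⟩
    | 1 =>
      intro F a _ h0
      exact ⟨a, by simpa using h0, 1, by simp⟩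
    | (n+2) =>
      intro F a hu h0
      obtain ⟨u, hu⟩ := hu
      set v : R := ((u⁻¹ : Rˣ) : R) with hv
      have hv1 : F.derivative.eval a * v = 1 := by rw [← hu, hv]; exact u.mul_inv
      set h : R := -(F.eval a * v) with hh
      obtain ⟨k, hk⟩ := F.binomExpansion a h
      have hb : F.eval (a + h) = (k * v ^ 2) * F.eval a ^ 2 := by
        rw [hk, hh]
        linear_combination (-F.eval a) * hv1
      have hpow : F.eval (a + h) ^ (n + 1) = 0 := by
        have hz : F.eval a ^ ((n + 2) + n) = 0 := by rw [pow_add, h0, zero_mul]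
        rw [hb, mul_pow, ← pow_mul, show 2 * (n + 1) = (n + 2) + n by ring, hz, mul_zero]
      have hanil : IsNilpotent (F.eval a) := ⟨n + 2, h0⟩
      have hnilh : IsNilpotent h := ((Commute.all _ v).isNilpotent_mul_right hanil).neg
      have hderiv : IsUnit (F.derivative.eval (a + h)) := by
        obtain ⟨c, hc⟩ := sub_dvd_eval_sub (a + h) a F.derivative
        have heq : F.derivative.eval (a + h) =
            F.derivative.eval a + ((a + h) - a) * c := by rw [← hc]; ring
        have hnil2 : IsNilpotent (((a + h) - a) * c) := by
          have : IsNilpotent ((a + h) - a) := by simpa using hnilh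
          exact (Commute.all _ c).isNilpotent_mul_right this
        rw [heq]
        exact hnil2.isUnit_add_left_of_commute ⟨u, hu⟩ (Commute.all _ _)
      obtain ⟨r, hr, hrnil⟩ := ih (n + 1) (by omega) F (a + h) hderiv hpow
      refine ⟨r, hr, ?_⟩
      have : r - a = (r - (a + h)) + h := by ring
      rw [this]
      exact (Commute.all _ _).isNilpotent_add hrnil hnilh

end Newton

lemma henselian_of_surj {R S : Type*} [CommRing R] [CommRing S] [HenselianLocalRing S]
    (f : R →+* S) (hf : Function.Surjective f)
    (hker : ∀ x ∈ RingHom.ker f, IsNilpotent x) : HenselianLocalRing R := by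
  have hunit : ∀ x : R, IsUnit (f x) → IsUnit x := by
    intro x hx
    obtain ⟨v, hv⟩ := hx.exists_right_inv
    obtain ⟨y, rfl⟩ := hf v
    have hmem : x * y - 1 ∈ RingHom.ker f := by
      simp [RingHom.mem_ker, map_mul, hv]
    have h1 : IsUnit (x * y) := by
      have := (hker _ hmem).isUnit_add_one
      rwa [sub_add_cancel] at this
    exact isUnit_of_mul_isUnit_left h1
  have : Nontrivial R := f.domain_nontrivial
  have hloc : IsLocalRing R := by
    refine IsLocalRing.of_isUnit_or_isUnit_one_sub_self fun a => ?_
    refine (IsLocalRing.isUnit_or_isUnit_one_sub_self (f a)).imp (hunit a) fun h => ?_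
    exact hunit (1 - a) (by rwa [map_sub, map_one])
  have hmem : ∀ x : R, x ∈ maximalIdeal R ↔ f x ∈ maximalIdeal S := by
    intro x
    rw [mem_maximalIdeal, mem_maximalIdeal, mem_nonunits_iff, mem_nonunits_iff]
    exact ⟨fun h hx => h (hunit x hx), fun h hx => h (hx.map f)⟩
  refine { toIsLocalRing := hloc, is_henselian := ?_ }
  intro F hF a₀ h₁ h₂
  set G := F.map f with hG
  have hGx : ∀ x : R, G.eval (f x) = f (F.eval x) := fun x => by
    rw [hG, eval_map, eval₂_at_apply]
  have hG'x : ∀ x : R, G.derivative.eval (f x) = f (F.derivative.eval x) := fun x => by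
    rw [hG, derivative_map, eval_map, eval₂_at_apply]
  obtain ⟨b, hbroot, hbmem⟩ := HenselianLocalRing.is_henselian G (hF.map f) (f a₀)
    (by rw [hGx]; exact (hmem _).mp h₁) (by rw [hG'x]; exact h₂.map f)
  obtain ⟨a₁, rfl⟩ := hf b
  have hkernil : IsNilpotent (F.eval a₁) := by
    refine hker _ ?_
    rw [RingHom.mem_ker, ← hGx]
    exact hbroot
  have hdiff : G.derivative.eval (f a₁) - G.derivative.eval (f a₀) ∈ maximalIdeal S := by
    obtain ⟨c, hc⟩ := sub_dvd_eval_sub (f a₁) (f a₀) G.derivative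
    rw [hc]
    exact Ideal.mul_mem_right _ _ hbmem
  have hGunit : IsUnit (G.derivative.eval (f a₁)) := by
    by_contra hnu
    have hm1 : G.derivative.eval (f a₁) ∈ maximalIdeal S := by
      rwa [mem_maximalIdeal, mem_nonunits_iff]
    have hm2 : G.derivative.eval (f a₀) ∈ maximalIdeal S := by
      have heq : G.derivative.eval (f a₀) = G.derivative.eval (f a₁) -
          (G.derivative.eval (f a₁) - G.derivative.eval (f a₀)) := by ring
      rw [heq]
      exact Ideal.sub_mem _ hm1 hdiff
    have : IsUnit (G.derivative.eval (f a₀)) := by rw [hG'x]; exact h₂.map f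
    exact (mem_maximalIdeal _).mp hm2 this
  have hunit' : IsUnit (F.derivative.eval a₁) := by
    apply hunit
    rw [← hG'x a₁]
    exact hGunit
  obtain ⟨m, hm⟩ := hkernil
  obtain ⟨r, hr, hrnil⟩ := newton_aux m F a₁ hunit' hm
  refine ⟨r, hr, ?_⟩
  rw [hmem, map_sub]
  have h3 : f r - f a₀ = f (r - a₁) + (f a₁ - f a₀) := by rw [map_sub]; ring
  rw [h3]
  refine Ideal.add_mem _ ?_ hbmem
  have : f (r - a₁) ∈ nilradical S := mem_nilradical.mpr (hrnil.map f)
  exact nilradical_le_prime (maximalIdeal S) this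

/-- Let `𝒪` be a henselian valuation ring with fraction field `K`, `A` a
zero-dimensional local ring with residue field `K`, and `R = 𝒪 ×_K A`.  Then `R` is a
henselian local ring. -/
theorem stmt_7 (O K A : Type*) [CommRing O] [IsDomain O] [ValuationRing O]
    [HenselianLocalRing O]
    [Field K] [Algebra O K] [IsFractionRing O K]
    [CommRing A] [IsLocalRing A] (hA : ringKrullDim A = 0)
    (π : A →+* K) (hπ : Function.Surjective π)
    (hker : RingHom.ker π = IsLocalRing.maximalIdeal A) :
    HenselianLocalRing (milnorRing O K A (algebraMap O K) π) := by
  -- maximal ideal of A consists of nilpotents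
  have hnilrad : IsLocalRing.maximalIdeal A ≤ nilradical A := by
    rw [nilradical_eq_sInf]
    refine le_sInf fun p hp => ?_
    haveI : p.IsPrime := hp
    have hle : p ≤ IsLocalRing.maximalIdeal A :=
      IsLocalRing.le_maximalIdeal ‹p.IsPrime›.ne_top
    rcases eq_or_lt_of_le hle with h | h
    · exact h ▸ le_rfl
    · exfalso
      let P : PrimeSpectrum A := ⟨p, ‹p.IsPrime›⟩
      let M : PrimeSpectrum A :=
        ⟨IsLocalRing.maximalIdeal A, (IsLocalRing.maximalIdeal.isMaximal A).isPrime⟩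
      have hPM : P < M := h
      let c : LTSeries (PrimeSpectrum A) := (RelSeries.singleton _ P).snoc M hPM
      have h1 : (c.length : WithBot ℕ∞) ≤ Order.krullDim (PrimeSpectrum A) :=
        Order.LTSeries.length_le_krullDim c
      have h2 : ((1 : ℕ) : WithBot ℕ∞) ≤ ringKrullDim A := h1
      rw [hA] at h2
      norm_num at h2
  let g : ↥(milnorRing O K A (algebraMap O K) π) →+* O :=
    (RingHom.fst O A).comp (Subring.subtype _)
  have hsurj : Function.Surjective g := by
    intro o
    obtain ⟨a, ha⟩ := hπ (algebraMap O K o)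
    exact ⟨⟨(o, a), ha.symm⟩, rfl⟩
  have hkernil : ∀ x ∈ RingHom.ker g, IsNilpotent x := by
    rintro ⟨⟨o, a⟩, hoa⟩ hx
    rw [RingHom.mem_ker] at hx
    have ho : o = 0 := hx
    have hoa' : algebraMap O K o = π a := hoa
    have hπa : π a = 0 := by rw [← hoa', ho, map_zero]
    have hmem : a ∈ IsLocalRing.maximalIdeal A := by rw [← hker]; exact hπa
    obtain ⟨m, hm⟩ := mem_nilradical.mp (hnilrad hmem)
    refine ⟨m + 1, ?_⟩
    apply Subtype.ext
    rw [SubmonoidClass.coe_pow, ZeroMemClass.coe_zero]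
    have : ((o, a) : O × A) ^ (m + 1) = (o ^ (m + 1), a ^ (m + 1)) := rfl
    rw [this, ho, Prod.mk_eq_zero]
    constructor
    · rw [zero_pow]; omega
    · rw [pow_succ, hm, zero_mul]
  exact henselian_of_surj g hsurj hkernil
end

section
/- Let R be a local ring such that R/Nil(R) is a henselian local ring. Then R is a henselian local ring. -/
open Polynomial IsLocalRing

private lemma newton_nilpotent {R : Type*} [CommRing R] (f : R[X]) :
    ∀ n : ℕ, ∀ b : R, f.eval b ^ (n + 1) = 0 → IsUnit (f.derivative.eval b) →
      ∃ a : R, f.IsRoot a ∧ a - b ∈ Ideal.span {f.eval b} := by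
  intro n
  induction n with
  | zero =>
    intro b hb _
    exact ⟨b, by simpa using hb, by simp⟩
  | succ n ih =>
    intro b hb hu
    set u : R := ↑hu.unit⁻¹ with hu_def
    have huu : f.derivative.eval b * u = 1 := by
      simp [hu_def]
    set y : R := -(f.eval b * u) with hy
    obtain ⟨k, hk⟩ := f.binomExpansion b y
    have hfy : f.derivative.eval b * y = -f.eval b := by
      rw [hy, show f.derivative.eval b * -(f.eval b * u) =
        -(f.eval b * (f.derivative.eval b * u)) from by ring, huu, mul_one]
    have hb' : f.eval (b + y) = k * u ^ 2 * f.eval b ^ 2 := by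
      rw [hk, hfy, hy]; ring
    have hz : f.eval b ^ (2 * (n + 1)) = 0 := by
      obtain ⟨m, hm⟩ := Nat.exists_eq_add_of_le (show n + 2 ≤ 2 * (n + 1) by omega)
      rw [hm, pow_add, hb, zero_mul]
    have hbpow : f.eval (b + y) ^ (n + 1) = 0 := by
      rw [hb', mul_pow, mul_pow, ← pow_mul, ← pow_mul, hz, mul_zero]
    have hnil : IsNilpotent (f.eval b) := ⟨n + 2, hb⟩
    have hynil : IsNilpotent y := by
      rw [hy]
      exact ((Commute.all _ _).isNilpotent_mul_right hnil).neg
    have hu' : IsUnit (f.derivative.eval (b + y)) := by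
      obtain ⟨c, hc⟩ := sub_dvd_eval_sub (b + y) b f.derivative
      have hrep : f.derivative.eval (b + y) = (b + y - b) * c + f.derivative.eval b := by
        rw [← hc]; ring
      rw [hrep]
      exact IsNilpotent.isUnit_add_right_of_commute
        (by simpa [add_sub_cancel_left] using (Commute.all _ _).isNilpotent_mul_right hynil)
        hu (Commute.all _ _)
    obtain ⟨a, ha, hab⟩ := ih (b + y) hbpow hu'
    refine ⟨a, ha, ?_⟩
    have h1 : a - (b + y) ∈ Ideal.span {f.eval b} := by
      refine Ideal.span_singleton_le_span_singleton.2 ⟨k * u ^ 2 * f.eval b, by rw [hb']; ring⟩ hab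
    have h2 : y ∈ Ideal.span {f.eval b} := by
      rw [hy]
      exact neg_mem (Ideal.mul_mem_right _ _ (Ideal.subset_span rfl))
    have := Ideal.add_mem _ h1 h2
    simpa [sub_add_eq_sub_sub, sub_add_cancel] using this

/-- Henselian-ness descends along nil thickenings: if `R` is a local ring such that
`R/Nil(R)` is a henselian local ring, then `R` is a henselian local ring. -/
theorem stmt_8 (R : Type*) [CommRing R] [IsLocalRing R]
    (h : HenselianLocalRing (R ⧸ nilradical R)) : HenselianLocalRing R := by
  let π : R →+* R ⧸ nilradical R := Ideal.Quotient.mk (nilradical R)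
  have hjac : nilradical R ≤ Ideal.jacobson ⊥ := Ideal.radical_le_jacobson
  haveI : IsLocalHom π := isLocalHom_of_le_jacobson_bot _ hjac
  constructor
  intro f hf a₀ h₁ h₂
  -- push to the quotient
  have hf' : (f.map π).Monic := hf.map π
  have heval : (f.map π).eval (π a₀) ∈ maximalIdeal (R ⧸ nilradical R) := by
    rw [eval_map, eval₂_at_apply]
    intro hunit
    exact h₁ (isUnit_of_map_unit π _ hunit)
  have hder : IsUnit ((f.map π).derivative.eval (π a₀)) := by
    rw [derivative_map, eval_map, eval₂_at_apply]
    exact h₂.map π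
  obtain ⟨b₀, hb₀, hb₀'⟩ := h.is_henselian (f.map π) hf' (π a₀) heval hder
  obtain ⟨b, rfl⟩ := Ideal.Quotient.mk_surjective b₀
  -- f.eval b is nilpotent
  have hnil : IsNilpotent (f.eval b) := by
    rw [← mem_nilradical, ← Ideal.Quotient.eq_zero_iff_mem]
    simpa [π, eval_map, eval₂_at_apply] using hb₀
  -- f'.eval b is a unit
  have hbm : b - a₀ ∈ maximalIdeal R := by
    intro hunit
    exact (show π b - π a₀ ∈ maximalIdeal _ from hb₀')
      (by rw [← map_sub]; exact hunit.map π)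
  have hderb : IsUnit (f.derivative.eval b) := by
    obtain ⟨c, hc⟩ := sub_dvd_eval_sub b a₀ f.derivative
    have hrep : f.derivative.eval b = (b - a₀) * c + f.derivative.eval a₀ := by
      rw [← hc]; ring
    by_contra hcon
    have : f.derivative.eval b ∈ maximalIdeal R := hcon
    have : f.derivative.eval a₀ ∈ maximalIdeal R := by
      have h3 : (b - a₀) * c ∈ maximalIdeal R := Ideal.mul_mem_right _ _ hbm
      have := Ideal.sub_mem _ this h3
      rwa [hrep, add_sub_cancel_left] at this
    exact this h₂
  obtain ⟨n, hn⟩ := hnil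
  have hn' : f.eval b ^ (n + 1) = 0 := by rw [pow_succ, hn, zero_mul]
  obtain ⟨a, ha, hab⟩ := newton_nilpotent f n b hn' hderb
  refine ⟨a, ha, ?_⟩
  have habm : a - b ∈ maximalIdeal R := by
    have : a - b ∈ nilradical R := by
      refine Ideal.span_le.2 ?_ hab
      intro x hx
      rw [Set.mem_singleton_iff] at hx
      subst hx
      exact mem_nilradical.2 ⟨n, hn⟩
    exact nilradical_le_prime (maximalIdeal R) this
  have := Ideal.add_mem _ habm hbm
  simpa [sub_add_sub_cancel] using this
end

section
/- Let 𝔽 be a ring and R an 𝔽-algebra such that the projection R → R_red = R/Nil(R) admits a section s: R_red → R of 𝔽-algebras. Then R is the filtered union (directed colimit) of the subalgebras R_λ = s(R_red)[S_λ] ⊆ R generated over s(R_red) by finite subsets S_λ ⊆ Nil(R), and each R_λ has finitely generated nilradical with (R_λ)_red ≅ R_red. -/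
/-- Let `𝔽` be a ring and `R` an `𝔽`-algebra such that the projection
`R → R_red = R/Nil(R)` admits a section `s` of `𝔽`-algebras.  Then `R` is the
filtered union of the subalgebras `s(R_red)[S]` generated over `s(R_red)` by finite
subsets `S ⊆ Nil(R)` (the family is monotone, hence directed, and its union is all of
`R`), and each such subalgebra has finitely generated nilradical and reduction
isomorphic to `R_red`. -/
theorem stmt_11 (F R : Type*) [CommRing F] [CommRing R] [Algebra F R]
    (s : (R ⧸ nilradical R) →ₐ[F] R)
    (hs : ∀ x : R ⧸ nilradical R, Ideal.Quotient.mk (nilradical R) (s x) = x) :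
    (∀ r : R, ∃ S : Finset R, ↑S ⊆ (nilradical R : Set R) ∧
        r ∈ Algebra.adjoin F ((s.range : Set R) ∪ ↑S)) ∧
    (∀ S T : Finset R, S ⊆ T →
        Algebra.adjoin F ((s.range : Set R) ∪ (↑S : Set R)) ≤
          Algebra.adjoin F ((s.range : Set R) ∪ (↑T : Set R))) ∧
    (∀ S : Finset R, ↑S ⊆ (nilradical R : Set R) →
        (nilradical (Algebra.adjoin F ((s.range : Set R) ∪ ↑S))).FG ∧
        Nonempty ((Algebra.adjoin F ((s.range : Set R) ∪ ↑S) ⧸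
            nilradical (Algebra.adjoin F ((s.range : Set R) ∪ (↑S : Set R)))) ≃+*
          (R ⧸ nilradical R))) := by
  set π := Ideal.Quotient.mk (nilradical R) with hπdef
  refine ⟨?_, ?_, ?_⟩
  · -- union is everything
    intro r
    refine ⟨{r - s (π r)}, ?_, ?_⟩
    · intro x hx
      simp only [Finset.coe_singleton, Set.mem_singleton_iff] at hx
      subst hx
      have h0 : π (r - s (π r)) = 0 := by
        rw [map_sub, hs]; ring
      rw [Ideal.Quotient.eq_zero_iff_mem] at h0
      exact h0
    · have h1 : s (π r) ∈ Algebra.adjoin F ((s.range : Set R) ∪ (↑({r - s (π r)} : Finset R) : Set R)) :=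
        Algebra.subset_adjoin (Or.inl ⟨_, rfl⟩)
      have h2 : r - s (π r) ∈ Algebra.adjoin F ((s.range : Set R) ∪ (↑({r - s (π r)} : Finset R) : Set R)) :=
        Algebra.subset_adjoin (Or.inr (by simp))
      have := add_mem h1 h2
      simpa using this
  · -- monotone
    intro S T hST
    exact Algebra.adjoin_mono (Set.union_subset_union_right _ (by exact_mod_cast hST))
  · -- each piece
    intro S hS
    set A := Algebra.adjoin F ((s.range : Set R) ∪ (↑S : Set R)) with hAdef
    have hsA : ∀ y, s y ∈ A := fun y => Algebra.subset_adjoin (Or.inl ⟨y, rfl⟩)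
    have hSA : ∀ x ∈ S, x ∈ A := fun x hx => Algebra.subset_adjoin (Or.inr hx)
    set G : Set A := {a : A | (a : R) ∈ S} with hGdef
    have hGfin : G.Finite := S.finite_toSet.preimage (Subtype.coe_injective.injOn)
    -- key decomposition
    have key : ∀ (r : R) (h : r ∈ A), ∃ m ∈ Ideal.span G, r = s (π r) + ((m : A) : R) := by
      intro r hr
      induction hr using Algebra.adjoin_induction with
      | mem x hx =>
        rcases hx with hx | hx
        · obtain ⟨y, rfl⟩ := hx
          refine ⟨0, Ideal.zero_mem _, ?_⟩
          show s y = s (π (s y)) + ((0 : A) : R)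
          rw [hs]; simp
        · refine ⟨⟨x, hSA x hx⟩, Ideal.subset_span hx, ?_⟩
          have : π x = 0 := Ideal.Quotient.eq_zero_iff_mem.mpr (hS hx)
          rw [this]; simp
      | algebraMap r =>
        refine ⟨0, Ideal.zero_mem _, ?_⟩
        have : π ((algebraMap F R) r) = algebraMap F (R ⧸ nilradical R) r := by
          rw [hπdef]
          exact (Ideal.Quotient.mk_algebraMap F (nilradical R) r)
        rw [this, s.commutes]; simp
      | add x y hx hy ihx ihy =>
        obtain ⟨m₁, hm₁, he₁⟩ := ihx
        obtain ⟨m₂, hm₂, he₂⟩ := ihy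
        refine ⟨m₁ + m₂, Ideal.add_mem _ hm₁ hm₂, ?_⟩
        rw [map_add, map_add]
        conv_lhs => rw [he₁, he₂]
        push_cast
        ring
      | mul x y hx hy ihx ihy =>
        obtain ⟨m₁, hm₁, he₁⟩ := ihx
        obtain ⟨m₂, hm₂, he₂⟩ := ihy
        refine ⟨⟨s (π x), hsA _⟩ * m₂ + m₁ * ⟨s (π y), hsA _⟩ + m₁ * m₂,
          Ideal.add_mem _ (Ideal.add_mem _ (Ideal.mul_mem_left _ _ hm₂)
            (Ideal.mul_mem_right _ _ hm₁)) (Ideal.mul_mem_right _ _ hm₁), ?_⟩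
        rw [map_mul, map_mul]
        conv_lhs => rw [he₁, he₂]
        push_cast
        ring
    -- nilradical A = span G
    have hnil_eq : nilradical A = Ideal.span G := by
      apply le_antisymm
      · intro a ha
        obtain ⟨m, hm, hme⟩ := key (a : R) a.2
        have hπa : π (a : R) = 0 := by
          rw [Ideal.Quotient.eq_zero_iff_mem]
          exact (mem_nilradical.mp ha).map A.val
        rw [hπa, map_zero, zero_add] at hme
        rwa [show a = m from Subtype.ext hme]
      · rw [Ideal.span_le]
        intro a ha
        obtain ⟨n, hn⟩ := (hS ha : IsNilpotent ((a : A) : R))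
        refine SetLike.mem_coe.mpr (mem_nilradical.mpr ⟨n, Subtype.ext ?_⟩)
        push_cast
        exact hn
    constructor
    · rw [hnil_eq]
      exact Submodule.fg_span hGfin
    · -- iso with R_red
      let φ : A →+* (R ⧸ nilradical R) := π.comp (A.val : A →ₐ[F] R).toRingHom
      have hφsurj : Function.Surjective φ := fun y => ⟨⟨s y, hsA y⟩, hs y⟩
      have hker : RingHom.ker φ = nilradical A := by
        ext a
        rw [RingHom.mem_ker, mem_nilradical]
        constructor
        · intro h
          have h1 : (a : R) ∈ nilradical R := by
            rw [← Ideal.Quotient.eq_zero_iff_mem]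
            exact h
          obtain ⟨n, hn⟩ := (mem_nilradical.mp h1 : IsNilpotent (a : R))
          exact ⟨n, Subtype.ext (by push_cast; exact hn)⟩
        · intro h
          show π (a : R) = 0
          rw [Ideal.Quotient.eq_zero_iff_mem]
          exact mem_nilradical.mpr (h.map A.val)
      exact ⟨(Ideal.quotEquivOfEq hker.symm).trans (RingHom.quotientKerEquivOfSurjective hφsurj)⟩
end

section
/- Let A be a commutative ring, K a field with a surjective ring homomorphism π: A → K whose kernel consists of nilpotent elements, 𝔽₀ ⊆ K a subfield of A's chosen coefficient field mapping into K, and x ∈ K transcendental over 𝔽₀ with 𝔽₀ ⊆ im(composite 𝔽₀ → A → K). If 𝔽₀ lifts to a subring of A, then the subfield 𝔽₀(x) ⊆ K lifts to A: there exists a ring homomorphism 𝔽₀(x) → A whose composition with π is the inclusion 𝔽₀(x) ⊆ K. (Concretely: choose any preimage a of x; every nonzero polynomial f over the lift of 𝔽₀ evaluated at a maps to a nonzero element of K, hence is a unit in A since ker π ⊆ Nil(A), so 𝔽₀[x] → A extends to 𝔽₀(x).) -/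
/-- Let `A` be a commutative ring, `π : A → K` a surjective ring map onto a field with
nil kernel, `F ⊆ K` a subfield that lifts to `A` via `ι` (i.e. `π ∘ ι` is the
inclusion `F ⊆ K`), and `x ∈ K` transcendental over `F`.  Then the subfield `F(x) ⊆ K`
lifts to `A`: there is a ring homomorphism `F(x) → A` whose composite with `π` is the
inclusion `F(x) ⊆ K`. -/
theorem stmt_12 (A K : Type*) [CommRing A] [Field K]
    (π : A →+* K) (hπ : Function.Surjective π)
    (hker : ∀ a ∈ RingHom.ker π, IsNilpotent a)
    (F : Subfield K) (ι : F →+* A) (hι : π.comp ι = F.subtype)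
    (x : K) (hx : Transcendental F x) :
    ∃ ψ : (Subfield.closure ((F : Set K) ∪ {x})) →+* A,
      π.comp ψ = (Subfield.closure ((F : Set K) ∪ {x})).subtype := by
  classical
  obtain ⟨a, ha⟩ := hπ x
  set S := Subfield.closure ((F : Set K) ∪ {x}) with hS
  -- units criterion
  have hunit : ∀ b : A, π b ≠ 0 → IsUnit b := by
    intro b hb
    obtain ⟨c, hc⟩ := hπ (π b)⁻¹
    have hn : IsNilpotent (b * c - 1) := by
      apply hker
      simp [RingHom.mem_ker, hc, mul_inv_cancel₀ hb]
    have : IsUnit (b * c) := by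
      have := hn.isUnit_add_one
      simpa using this
    exact isUnit_of_mul_isUnit_left this
  -- the polynomial evaluation map
  set φ : Polynomial F →+* A := Polynomial.eval₂RingHom ι a with hφ
  have hcomm : ∀ f : Polynomial F, π (φ f) = Polynomial.aeval x f := by
    intro f
    have := Polynomial.hom_eval₂ f ι π a
    simp only [hφ, Polynomial.coe_eval₂RingHom]
    rw [this, hι, ha]
    rfl
  have hu : ∀ y : (nonZeroDivisors (Polynomial F)), IsUnit (φ y) := by
    rintro ⟨f, hf⟩
    apply hunit
    rw [hcomm]
    have hf0 : f ≠ 0 := nonZeroDivisors.ne_zero hf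
    intro h0
    exact hf0 ((transcendental_iff.mp hx) f h0)
  set ψ' : RatFunc F →+* A := IsLocalization.lift (S := RatFunc F) hu with hψ'
  set e : RatFunc F →+* K := π.comp ψ' with he
  have healg : ∀ f : Polynomial F, e (algebraMap _ (RatFunc F) f) = Polynomial.aeval x f := by
    intro f
    simp only [he, RingHom.comp_apply, hψ', IsLocalization.lift_eq]
    exact hcomm f
  have hinj : Function.Injective e := e.injective
  -- range of e is S
  have hrange : e.fieldRange = S := by
    apply le_antisymm
    · rintro _ ⟨r, rfl⟩
      induction r using RatFunc.induction_on with
      | f p q hq =>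
        have hxS : x ∈ S := Subfield.subset_closure (by simp)
        have hFS : ∀ c : F, (c : K) ∈ S := fun c => Subfield.subset_closure (Or.inl c.2)
        have hp : ∀ f : Polynomial F, (Polynomial.aeval x f : K) ∈ S := by
          intro f
          induction f using Polynomial.induction_on' with
          | add p q hp hq => rw [map_add]; exact add_mem hp hq
          | monomial n c =>
            rw [Polynomial.aeval_monomial]
            exact S.mul_mem (hFS c) (S.pow_mem hxS n)
        rw [map_div₀, healg, healg]
        exact div_mem (hp p) (hp q)
    · rw [hS]
      apply Subfield.closure_le.mpr
      rintro y (hy | hy)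
      · exact ⟨algebraMap _ _ (Polynomial.C (⟨y, hy⟩ : F)), by
          rw [healg]; simp; rfl⟩
      · exact ⟨algebraMap _ _ (Polynomial.X), by
          rw [healg]; simp [Set.mem_singleton_iff.mp hy]⟩
  -- build the equivalence
  have hbij : Function.Bijective e.rangeRestrictField :=
    ⟨fun u v huv => hinj (congrArg Subtype.val huv),
      fun ⟨y, hy⟩ => by obtain ⟨r, hr⟩ := RingHom.mem_fieldRange.mp hy; exact ⟨r, Subtype.ext hr⟩⟩
  let eq1 : RatFunc F ≃+* e.fieldRange := RingEquiv.ofBijective e.rangeRestrictField hbij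
  let eq2 : RatFunc F ≃+* S := eq1.trans (RingEquiv.subfieldCongr hrange)
  refine ⟨ψ'.comp (eq2.symm : S ≃+* RatFunc F), ?_⟩
  ext y
  have key : ∀ r : RatFunc F, ((eq2 r : S) : K) = e r := fun r => rfl
  have hy : e (eq2.symm y) = y := by rw [← key, RingEquiv.apply_symm_apply]
  simpa [he] using hy
end

section
/- Let A be an integral domain with fraction field K, and let 𝒪 ⊆ K be a valuation ring of K containing A. Let V = K[t]_{(t)} ×_K 𝒪 = {f ∈ K[t]_{(t)} : f(0) ∈ 𝒪} where K[t]_{(t)} → K is evaluation t ↦ 0. Then V is a valuation ring of the rational function field K(t) containing A[t], and dim V = dim 𝒪 + 1. In particular, the valuative dimension of A[t] is at least dim_v A + 1. -/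
open Polynomial

namespace Stmt16

variable {K : Type*} [Field K] (O : ValuationSubring K)

/-- The composite valuation subring as a subring. -/
def Vs : Subring (RatFunc K) where
  carrier := {x | ∃ p q : K[X], q.eval 0 ≠ 0 ∧
      x = algebraMap K[X] (RatFunc K) p / algebraMap K[X] (RatFunc K) q ∧
      p.eval 0 / q.eval 0 ∈ O}
  one_mem' := ⟨1, 1, by simp, by simp, by simpa using O.one_mem⟩
  zero_mem' := ⟨0, 1, by simp, by simp, by simpa using O.zero_mem⟩
  mul_mem' := by
    rintro x y ⟨p₁, q₁, h₁, rfl, m₁⟩ ⟨p₂, q₂, h₂, rfl, m₂⟩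
    refine ⟨p₁ * p₂, q₁ * q₂, by simp [h₁, h₂], by rw [map_mul, map_mul, div_mul_div_comm], ?_⟩
    simp only [eval_mul]
    rw [← div_mul_div_comm]
    exact O.mul_mem _ _ m₁ m₂
  add_mem' := by
    rintro x y ⟨p₁, q₁, h₁, rfl, m₁⟩ ⟨p₂, q₂, h₂, rfl, m₂⟩
    have hq₁ : q₁ ≠ 0 := fun h => h₁ (by simp [h])
    have hq₂ : q₂ ≠ 0 := fun h => h₂ (by simp [h])
    refine ⟨p₁ * q₂ + p₂ * q₁, q₁ * q₂, by simp [h₁, h₂], ?_, ?_⟩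
    · rw [div_add_div _ _ (RatFunc.algebraMap_ne_zero hq₁) (RatFunc.algebraMap_ne_zero hq₂)]
      push_cast [map_mul, map_add]
      ring_nf
    · have hO := O.add_mem _ _ m₁ m₂
      rw [div_add_div _ _ h₁ h₂] at hO
      simp only [eval_add, eval_mul]
      convert hO using 2
      ring
  neg_mem' := by
    rintro x ⟨p, q, h, rfl, m⟩
    exact ⟨-p, q, h, by rw [map_neg, neg_div], by simpa [neg_div] using O.neg_mem _ m⟩

theorem num_eval_ne_or_denom_eval_ne (x : RatFunc K) :
    x.num.eval 0 ≠ 0 ∨ x.denom.eval 0 ≠ 0 := by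
  by_contra h
  push_neg at h
  have h1 : X ∣ x.num := X_dvd_iff.mpr (by rw [coeff_zero_eq_eval_zero]; exact h.1)
  have h2 : X ∣ x.denom := X_dvd_iff.mpr (by rw [coeff_zero_eq_eval_zero]; exact h.2)
  exact Polynomial.not_isUnit_X ((x.isCoprime_num_denom).isUnit_of_dvd' h1 h2)

theorem mem_Vs_iff {x : RatFunc K} :
    x ∈ Vs O ↔ x.denom.eval 0 ≠ 0 ∧ x.num.eval 0 / x.denom.eval 0 ∈ O := by
  constructor
  · rintro ⟨p, q, hq, hx, hm⟩
    have hq0 : q ≠ 0 := fun h => hq (by simp [h])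
    have key : p * x.denom = x.num * q := by
      apply RatFunc.algebraMap_injective
      rw [map_mul, map_mul]
      rw [← div_eq_div_iff (RatFunc.algebraMap_ne_zero hq0)
        (RatFunc.algebraMap_ne_zero x.denom_ne_zero)]
      rw [← hx, RatFunc.num_div_denom]
    have keval : p.eval 0 * x.denom.eval 0 = x.num.eval 0 * q.eval 0 := by
      have := congrArg (Polynomial.eval 0) key
      simpa using this
    have hd : x.denom.eval 0 ≠ 0 := by
      intro hd
      rcases num_eval_ne_or_denom_eval_ne x with hn | h
      · apply hn
        have : x.num.eval 0 * q.eval 0 = 0 := by rw [← keval, hd, mul_zero]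
        exact (mul_eq_zero.mp this).resolve_right hq
      · exact h hd
    refine ⟨hd, ?_⟩
    have : x.num.eval 0 / x.denom.eval 0 = p.eval 0 / q.eval 0 := by
      rw [div_eq_div_iff hd hq, ← keval]
    rw [this]; exact hm
  · rintro ⟨hd, hm⟩
    exact ⟨x.num, x.denom, hd, (RatFunc.num_div_denom x).symm, hm⟩

/-- The composite valuation subring. -/
def V : ValuationSubring (RatFunc K) where
  toSubring := Vs O
  mem_or_inv_mem' := by
    intro x
    rcases eq_or_ne x 0 with rfl | hx
    · exact Or.inl (Subring.zero_mem _)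
    by_cases hd : x.denom.eval 0 = 0
    · right
      have hn : x.num.eval 0 ≠ 0 := (num_eval_ne_or_denom_eval_ne x).resolve_right (by simpa)
      refine ⟨x.denom, x.num, hn, ?_, by rw [hd, zero_div]; exact O.zero_mem⟩
      conv_lhs => rw [← RatFunc.num_div_denom x]
      rw [inv_div]
    · by_cases hn : x.num.eval 0 = 0
      · exact Or.inl ((mem_Vs_iff O).mpr ⟨hd, by rw [hn, zero_div]; exact O.zero_mem⟩)
      rcases O.mem_or_inv_mem (x.num.eval 0 / x.denom.eval 0) with h | h
      · exact Or.inl ((mem_Vs_iff O).mpr ⟨hd, h⟩)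
      · right
        refine ⟨x.denom, x.num, hn, ?_, by rwa [← one_div, one_div_div] at h⟩
        conv_lhs => rw [← RatFunc.num_div_denom x]
        rw [inv_div]

end Stmt16

namespace Stmt16

variable {K : Type*} [Field K] (O : ValuationSubring K)

theorem denom_eval₂_ne {x : RatFunc K} (hx : x ∈ Vs O) :
    Polynomial.eval₂ (RingHom.id K) 0 x.denom ≠ 0 := by
  rw [eval₂_at_zero, coeff_zero_eq_eval_zero]
  exact ((mem_Vs_iff O).mp hx).1

/-- Evaluation at `0` as a ring hom on `Vs O`. -/
noncomputable def evalHom : (Vs O) →+* K where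
  toFun x := RatFunc.eval (RingHom.id K) 0 x.1
  map_one' := RatFunc.eval_one (RingHom.id K) 0
  map_zero' := RatFunc.eval_zero (RingHom.id K) 0
  map_mul' x y :=
    RatFunc.eval_mul (hx := denom_eval₂_ne O x.2) (hy := denom_eval₂_ne O y.2)
  map_add' x y :=
    RatFunc.eval_add (hx := denom_eval₂_ne O x.2) (hy := denom_eval₂_ne O y.2)

theorem evalHom_apply (x : Vs O) :
    evalHom O x = x.1.num.eval 0 / x.1.denom.eval 0 := by
  simp [evalHom, RatFunc.eval, eval₂_at_zero, coeff_zero_eq_eval_zero]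

theorem evalHom_mem (x : Vs O) : evalHom O x ∈ O := by
  rw [evalHom_apply]
  exact ((mem_Vs_iff O).mp x.2).2

/-- The residue map `Vs O → O`. -/
noncomputable def resHom : (Vs O) →+* O :=
  (evalHom O).codRestrict _ (evalHom_mem O)

theorem resHom_surjective : Function.Surjective (resHom O) := by
  rintro ⟨c, hc⟩
  have hmem : algebraMap K[X] (RatFunc K) (C c) ∈ Vs O :=
    ⟨C c, 1, by simp, by simp, by simpa using hc⟩
  refine ⟨⟨_, hmem⟩, ?_⟩
  ext
  show evalHom O _ = c
  simp [evalHom, RatFunc.eval_algebraMap, eval₂_at_zero]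

theorem tmem : algebraMap K[X] (RatFunc K) X ∈ Vs O :=
  ⟨X, 1, by simp, by simp, by simpa using O.zero_mem⟩

/-- The element `t`. -/
noncomputable def tEl : Vs O := ⟨algebraMap K[X] (RatFunc K) X, tmem O⟩

theorem tEl_mem_ker : tEl O ∈ RingHom.ker (resHom O) := by
  rw [RingHom.mem_ker]
  ext
  show evalHom O _ = 0
  simp [evalHom, tEl, RatFunc.eval_algebraMap, eval₂_at_zero]

theorem tEl_ne_zero : tEl O ≠ 0 := by
  intro h
  have : (algebraMap K[X] (RatFunc K)) X = 0 := congrArg Subtype.val h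
  exact RatFunc.algebraMap_ne_zero X_ne_zero this

theorem ker_ne_bot : RingHom.ker (resHom O) ≠ ⊥ := fun h =>
  tEl_ne_zero O (by simpa [h] using tEl_mem_ker O)

end Stmt16

namespace Stmt16

variable {K : Type*} [Field K] (O : ValuationSubring K)

theorem aux_mem {j : ℕ} (hj : j ≠ 0) (a b : K[X]) (hb : b.eval 0 ≠ 0) :
    algebraMap K[X] (RatFunc K) (X ^ j * a) / algebraMap K[X] (RatFunc K) b ∈ Vs O :=
  ⟨X ^ j * a, b, hb, rfl, by simp [zero_pow hj, O.zero_mem]⟩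

theorem factor_num {x : RatFunc K} (hx : x ≠ 0) :
    ∃ (k : ℕ) (g : K[X]), x.num = X ^ k * g ∧ g.eval 0 ≠ 0 := by
  obtain ⟨g, hgeq, hgdvd⟩ :=
    x.num.exists_eq_pow_rootMultiplicity_mul_and_not_dvd (RatFunc.num_ne_zero hx) 0
  rw [map_zero, sub_zero] at hgeq hgdvd
  refine ⟨_, g, hgeq, fun h => hgdvd ?_⟩
  rw [X_dvd_iff, coeff_zero_eq_eval_zero]
  exact h

theorem tEl_mem_prime (P : Ideal (Vs O)) (hPp : P.IsPrime) (hP : P ≠ ⊥) : tEl O ∈ P := by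
  obtain ⟨y, hyP, hy0⟩ := Submodule.exists_mem_ne_zero_of_ne_bot hP
  have hy1 : (y : RatFunc K) ≠ 0 := fun h => hy0 (Subtype.ext h)
  obtain ⟨k, g, hgeq, hg0⟩ := factor_num (x := (y : RatFunc K)) hy1
  have zmem : algebraMap K[X] (RatFunc K) (X ^ 1 * (y : RatFunc K).denom) /
      algebraMap K[X] (RatFunc K) g ∈ Vs O := aux_mem O one_ne_zero _ _ hg0
  have h1 : (algebraMap K[X] (RatFunc K)) g ≠ 0 :=
    RatFunc.algebraMap_ne_zero (fun h => hg0 (by simp [h]))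
  have h2 : (algebraMap K[X] (RatFunc K)) (y : RatFunc K).denom ≠ 0 :=
    RatFunc.algebraMap_ne_zero (y : RatFunc K).denom_ne_zero
  have key : (algebraMap K[X] (RatFunc K) (y : RatFunc K).num /
        algebraMap K[X] (RatFunc K) (y : RatFunc K).denom) *
      (algebraMap K[X] (RatFunc K) (X ^ 1 * (y : RatFunc K).denom) /
      algebraMap K[X] (RatFunc K) g) = (algebraMap K[X] (RatFunc K) X) ^ (k + 1) := by
    rw [div_mul_div_comm, div_eq_iff (mul_ne_zero h2 h1), ← map_pow, ← map_mul, ← map_mul,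
      ← map_mul]
    exact congrArg _ (by rw [hgeq]; ring)
  rw [RatFunc.num_div_denom] at key
  have htp : (tEl O) ^ (k + 1) ∈ P := by
    have : (tEl O) ^ (k + 1) = y * ⟨_, zmem⟩ := Subtype.ext (by
      simp only [SubmonoidClass.coe_pow, MulMemClass.coe_mul]
      exact key.symm)
    rw [this]
    exact P.mul_mem_right _ hyP
  exact hPp.mem_of_pow_mem _ htp

theorem ker_le_prime (P : Ideal (Vs O)) (hPp : P.IsPrime) (hP : P ≠ ⊥) :
    RingHom.ker (resHom O) ≤ P := by
  have ht : tEl O ∈ P := tEl_mem_prime O P hPp hP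
  intro f hf
  rcases eq_or_ne f 0 with rfl | hf0
  · exact P.zero_mem
  have hf1 : (f : RatFunc K) ≠ 0 := fun h => hf0 (Subtype.ext h)
  have hd0 : (f : RatFunc K).denom.eval 0 ≠ 0 := ((mem_Vs_iff O).mp f.2).1
  have hfn : (f : RatFunc K).num.eval 0 = 0 := by
    have h0 : evalHom O f = 0 := congrArg Subtype.val (RingHom.mem_ker.mp hf)
    rw [evalHom_apply] at h0
    rcases div_eq_zero_iff.mp h0 with h | h
    · exact h
    · exact absurd h hd0
  obtain ⟨k, g, hgeq, hg0⟩ := factor_num (x := (f : RatFunc K)) hf1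
  have hk : k ≠ 0 := by
    rintro rfl
    rw [pow_zero, one_mul] at hgeq
    rw [hgeq] at hfn
    exact hg0 hfn
  obtain ⟨k', rfl⟩ : ∃ k', k = k' + 1 := ⟨k - 1, by omega⟩
  have wmem : algebraMap K[X] (RatFunc K) (X ^ (2 * k' + 1) * g ^ 2) /
      algebraMap K[X] (RatFunc K) ((f : RatFunc K).denom ^ 2) ∈ Vs O :=
    aux_mem O (by omega) _ _ (by simpa using pow_ne_zero 2 hd0)
  have h1 : (algebraMap K[X] (RatFunc K)) ((f : RatFunc K).denom ^ 2) ≠ 0 :=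
    RatFunc.algebraMap_ne_zero (pow_ne_zero 2 (f : RatFunc K).denom_ne_zero)
  have h2 : (algebraMap K[X] (RatFunc K)) (f : RatFunc K).denom ≠ 0 :=
    RatFunc.algebraMap_ne_zero (f : RatFunc K).denom_ne_zero
  have key : (algebraMap K[X] (RatFunc K) (f : RatFunc K).num /
        algebraMap K[X] (RatFunc K) (f : RatFunc K).denom) ^ 2 =
      (algebraMap K[X] (RatFunc K) X) *
      (algebraMap K[X] (RatFunc K) (X ^ (2 * k' + 1) * g ^ 2) /
        algebraMap K[X] (RatFunc K) ((f : RatFunc K).denom ^ 2)) := by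
    rw [mul_div_assoc', div_pow, div_eq_div_iff (pow_ne_zero 2 h2) h1, ← map_pow, ← map_pow,
      ← map_mul, ← map_mul, ← map_mul]
    exact congrArg _ (by rw [hgeq]; ring)
  rw [RatFunc.num_div_denom] at key
  have hfp : f ^ 2 ∈ P := by
    have : f ^ 2 = tEl O * ⟨_, wmem⟩ := Subtype.ext (by
      simp only [SubmonoidClass.coe_pow, MulMemClass.coe_mul]
      exact key)
    rw [this]
    exact P.mul_mem_right _ ht
  exact hPp.mem_of_pow_mem _ hfp

end Stmt16

namespace Stmt16

variable {K : Type*} [Field K] (O : ValuationSubring K)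

theorem comap_ne_bot (q : Ideal O) (_hq : q.IsPrime) :
    Ideal.comap (resHom O) q ≠ ⊥ := by
  intro h
  apply ker_ne_bot O
  rw [eq_bot_iff, ← h]
  exact Ideal.comap_mono bot_le

open scoped Classical in
/-- The order isomorphism between `WithBot (Spec O)` and `Spec (Vs O)`. -/
noncomputable def specIso : WithBot (PrimeSpectrum O) ≃o PrimeSpectrum (Vs O) where
  toFun x := x.recBotCoe ⟨⊥, Ideal.bot_prime⟩
    (fun q => ⟨(q.asIdeal).comap (resHom O), q.isPrime.comap _⟩)
  invFun P := if h : P.asIdeal = ⊥ then ⊥ else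
    (⟨Ideal.map (resHom O) P.asIdeal,
      Ideal.map_isPrime_of_surjective (H := P.isPrime) (resHom_surjective O)
        (ker_le_prime O P.asIdeal P.isPrime h)⟩ : PrimeSpectrum O)
  left_inv := by
    intro x
    induction x using WithBot.recBotCoe with
    | bot => exact dif_pos rfl
    | coe q =>
      dsimp only [WithBot.recBotCoe_coe]
      refine (dif_neg (comap_ne_bot O q.asIdeal q.isPrime)).trans ?_
      congr 1
      exact PrimeSpectrum.ext (Ideal.map_comap_of_surjective _ (resHom_surjective O) _)
  right_inv := by
    intro P
    dsimp only []
    by_cases h : P.asIdeal = ⊥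
    · rw [dif_pos h]
      exact PrimeSpectrum.ext h.symm
    · rw [dif_neg h]
      dsimp only [WithBot.recBotCoe_coe]
      refine PrimeSpectrum.ext ?_
      show Ideal.comap (resHom O) (Ideal.map (resHom O) P.asIdeal) = P.asIdeal
      rw [Ideal.comap_map_of_surjective _ (resHom_surjective O)]
      exact sup_eq_left.mpr (ker_le_prime O P.asIdeal P.isPrime h)
  map_rel_iff' := by
    intro a b
    induction a using WithBot.recBotCoe with
    | bot => exact iff_of_true bot_le bot_le
    | coe q1 =>
      induction b using WithBot.recBotCoe with
      | bot =>
        constructor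
        · intro h
          have h' : Ideal.comap (resHom O) q1.asIdeal ≤ (⊥ : Ideal (Vs O)) := h
          exact absurd (eq_bot_iff.mpr h') (comap_ne_bot O q1.asIdeal q1.isPrime)
        · intro h
          exact absurd h (by simp)
      | coe q2 =>
        rw [WithBot.coe_le_coe]
        exact (Ideal.comap_le_comap_iff_of_surjective _ (resHom_surjective O) _ _).trans Iff.rfl

theorem dim_eq : ringKrullDim (Vs O) = ringKrullDim O + 1 := by
  unfold ringKrullDim
  rw [← Order.krullDim_eq_of_orderIso (specIso O), Order.krullDim_withBot]

end Stmt16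

/-- Let `A` be a domain with fraction field `K` and `𝒪 ⊆ K` a valuation ring of `K`
containing `A`.  Then `V = {f ∈ K[t]_(t) : f(0) ∈ 𝒪}` is a valuation ring of the
rational function field `K(t)` containing `A[t]`, and `dim V = dim 𝒪 + 1`; in
particular the valuative dimension of `A[t]` is at least `dim_v A + 1`. -/
theorem stmt_16 (A : Type*) [CommRing A] [IsDomain A]
    (O : ValuationSubring (FractionRing A))
    (hO : ∀ a : A, algebraMap A (FractionRing A) a ∈ O) :
    ∃ V : ValuationSubring (RatFunc (FractionRing A)),
      (∀ x : RatFunc (FractionRing A), x ∈ V ↔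
        ∃ p q : Polynomial (FractionRing A), Polynomial.eval 0 q ≠ 0 ∧
          x = algebraMap (Polynomial (FractionRing A)) (RatFunc (FractionRing A)) p /
              algebraMap (Polynomial (FractionRing A)) (RatFunc (FractionRing A)) q ∧
          Polynomial.eval 0 p / Polynomial.eval 0 q ∈ O) ∧
      (∀ p : Polynomial A,
        algebraMap (Polynomial (FractionRing A)) (RatFunc (FractionRing A))
          (p.map (algebraMap A (FractionRing A))) ∈ V) ∧
      ringKrullDim V = ringKrullDim O + 1 := by
  refine ⟨Stmt16.V O, fun x => Iff.rfl, ?_, Stmt16.dim_eq O⟩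
  intro p
  refine ⟨p.map (algebraMap A (FractionRing A)), 1, by simp, by simp, ?_⟩
  rw [Polynomial.eval_zero_map]
  simpa using hO _
end
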